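/- Euclidean space R^k is an FR space with the optimal constant ε₀ = 1 − √(k/(k+1)): every bounded subset of R^k of diameter D is contained in a closed ball of radius √(k/(k+1))·D/√2. -/

import Mathlib

open Finset Metric Real Filter RealInnerProductSpace

section Jung

variable {E : Type*} [NormedAddCommGroup E] [InnerProductSpace ℝ E] [FiniteDimensional ℝ E]

/-- The quadratic computation at the heart of Jung's theorem. -/
lemma jung_quad {n : ℕ} (T : Finset E) (hT : T.Nonempty) (hcard : T.card ≤ n + 1)
    (w : E → ℝ) (hw0 : ∀ x ∈ T, 0 ≤ w x) (hw1 : ∑ x ∈ T, w x = 1)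
    (c : E) (hc : ∑ x ∈ T, w x • (x - c) = 0) (r D : ℝ)
    (hr : ∀ x ∈ T, ‖x - c‖ = r)
    (hdist : ∀ x ∈ T, ∀ y ∈ T, ‖x - y‖ ≤ D) :
    2 * r ^ 2 ≤ D ^ 2 * (n / (n + 1)) := by
  classical
  obtain ⟨x₀, hx₀⟩ := hT
  have hD : 0 ≤ D := le_trans (by simp) (hdist x₀ hx₀ x₀ hx₀)
  have key : ∑ x ∈ T, ∑ y ∈ T, (w x * w y) * ‖x - y‖ ^ 2 = 2 * r ^ 2 := by
    have expand : ∀ x ∈ T, ∀ y ∈ T, (w x * w y) * ‖x - y‖ ^ 2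
        = w x * w y * r ^ 2 + w x * w y * r ^ 2
          - 2 * ⟪w x • (x - c), w y • (y - c)⟫ := by
      intro x hx y hy
      have hxy : x - y = (x - c) - (y - c) := by abel
      rw [hxy, @norm_sub_sq_real, hr x hx, hr y hy, real_inner_smul_left,
        real_inner_smul_right]
      ring
    rw [Finset.sum_congr rfl fun x hx => Finset.sum_congr rfl fun y hy => expand x hx y hy]
    have h1 : ∑ x ∈ T, ∑ y ∈ T, (w x * w y * r ^ 2) = r ^ 2 := by
      simp only [← Finset.sum_mul, ← Finset.mul_sum, hw1]
      ring
    have h2 : ∑ x ∈ T, ∑ y ∈ T, ⟪w x • (x - c), w y • (y - c)⟫ = 0 := by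
      simp_rw [← inner_sum, ← sum_inner, hc, inner_zero_right]
    simp only [Finset.sum_sub_distrib, Finset.sum_add_distrib, ← Finset.mul_sum]
    rw [h1, h2]
    ring
  have bound : ∑ x ∈ T, ∑ y ∈ T, (w x * w y) * ‖x - y‖ ^ 2
      ≤ D ^ 2 * (1 - ∑ x ∈ T, (w x) ^ 2) := by
    have step : ∀ x ∈ T, ∀ y ∈ T, (w x * w y) * ‖x - y‖ ^ 2
        ≤ w x * w y * D ^ 2 - (if x = y then w x * w y * D ^ 2 else 0) := by
      intro x hx y hy
      by_cases hxy : x = y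
      · simp [hxy]
      · simp only [hxy, if_false, sub_zero]
        have h1 : ‖x - y‖ ^ 2 ≤ D ^ 2 := by
          have := hdist x hx y hy
          nlinarith [norm_nonneg (x - y)]
        have h2 : 0 ≤ w x * w y := mul_nonneg (hw0 x hx) (hw0 y hy)
        nlinarith
    calc ∑ x ∈ T, ∑ y ∈ T, (w x * w y) * ‖x - y‖ ^ 2
        ≤ ∑ x ∈ T, ∑ y ∈ T, (w x * w y * D ^ 2 - (if x = y then w x * w y * D ^ 2 else 0)) :=
          Finset.sum_le_sum fun x hx => Finset.sum_le_sum fun y hy => step x hx y hy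
      _ = D ^ 2 * (1 - ∑ x ∈ T, (w x) ^ 2) := by
          simp only [Finset.sum_sub_distrib]
          have e1 : ∑ x ∈ T, ∑ y ∈ T, (w x * w y * D ^ 2) = D ^ 2 := by
            simp only [← Finset.sum_mul, ← Finset.mul_sum, hw1]
            ring
          have e2 : ∑ x ∈ T, ∑ y ∈ T, (if x = y then w x * w y * D ^ 2 else 0)
              = ∑ x ∈ T, (w x) ^ 2 * D ^ 2 := by
            refine Finset.sum_congr rfl fun x hx => ?_
            rw [Finset.sum_ite_eq T x (fun y => w x * w y * D ^ 2)]
            rw [if_pos hx]; ring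
          rw [e1, e2, ← Finset.sum_mul]
          ring
  have hsq : (1 : ℝ) ≤ ((n : ℝ) + 1) * ∑ x ∈ T, (w x) ^ 2 := by
    have h := sq_sum_le_card_mul_sum_sq (s := T) (f := w)
    rw [hw1] at h
    have hcard' : (T.card : ℝ) ≤ (n : ℝ) + 1 := by exact_mod_cast hcard
    have hs2 : 0 ≤ ∑ x ∈ T, (w x) ^ 2 := Finset.sum_nonneg fun x _ => sq_nonneg _
    nlinarith
  have hn1 : (0 : ℝ) < (n : ℝ) + 1 := by positivity
  have hfinal : 1 - ∑ x ∈ T, (w x) ^ 2 ≤ (n : ℝ) / ((n : ℝ) + 1) := by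
    rw [le_div_iff₀ hn1]
    nlinarith
  calc 2 * r ^ 2 = ∑ x ∈ T, ∑ y ∈ T, (w x * w y) * ‖x - y‖ ^ 2 := key.symm
    _ ≤ D ^ 2 * (1 - ∑ x ∈ T, (w x) ^ 2) := bound
    _ ≤ D ^ 2 * ((n : ℝ) / ((n : ℝ) + 1)) := by
        apply mul_le_mul_of_nonneg_left hfinal (sq_nonneg D)


/-- Jung's lemma for a finite set of at most `n+1` points. -/
lemma jung_center {n : ℕ} (s : Finset E) (D : ℝ) (hD : 0 ≤ D)
    (hcard : s.card ≤ n + 1)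
    (hdist : ∀ x ∈ s, ∀ y ∈ s, dist x y ≤ D) :
    ∃ c : E, ∀ x ∈ s, dist c x ≤ Real.sqrt ((n : ℝ) / ((n : ℝ) + 1)) * D / Real.sqrt 2 := by
  classical
  rcases s.eq_empty_or_nonempty with rfl | hs
  · exact ⟨0, by simp⟩
  set R : ℝ := Real.sqrt ((n : ℝ) / ((n : ℝ) + 1)) * D / Real.sqrt 2 with hR
  have hR0 : 0 ≤ R := by positivity
  set f : E → ℝ := fun z => s.sup' hs fun x => dist z x with hf
  have hle : ∀ z, ∀ x ∈ s, dist z x ≤ f z := fun z x hx => Finset.le_sup' _ hx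
  have lip : ∀ z z', f z ≤ f z' + dist z z' := by
    intro z z'
    apply Finset.sup'_le
    intro x hx
    calc dist z x ≤ dist z z' + dist z' x := dist_triangle _ _ _
      _ ≤ dist z z' + f z' := by linarith [hle z' x hx]
      _ = f z' + dist z z' := by ring
  have hcont : Continuous f := by
    have : LipschitzWith 1 f := by
      apply LipschitzWith.of_dist_le_mul
      intro z z'
      rw [Real.dist_eq, abs_sub_le_iff]
      have h1 := lip z z'
      have h2 := lip z' z
      rw [dist_comm z' z] at h2
      push_cast
      constructor <;> linarith
    exact this.continuous
  obtain ⟨x₀, hx₀⟩ := id hs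
  have hx₀K : x₀ ∈ closedBall x₀ (f x₀) := by
    simp [mem_closedBall]
    exact le_trans dist_nonneg (hle x₀ x₀ hx₀)
  obtain ⟨c, hcK, hmin⟩ := (isCompact_closedBall x₀ (f x₀)).exists_isMinOn ⟨x₀, hx₀K⟩
    hcont.continuousOn
  set r : ℝ := f c with hrdef
  have hglob : ∀ z, r ≤ f z := by
    intro z
    by_cases hz : z ∈ closedBall x₀ (f x₀)
    · exact hmin hz
    · have h1 : f x₀ < dist z x₀ := by
        simpa [mem_closedBall, dist_comm] using hz
      have h2 : dist z x₀ ≤ f z := hle z x₀ hx₀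
      have h3 : r ≤ f x₀ := hmin hx₀K
      linarith
  obtain ⟨x₁, hx₁, hx₁r⟩ := Finset.exists_mem_eq_sup' hs fun x => dist c x
  set T : Finset E := s.filter fun x => dist c x = r with hT
  have hx₁T : x₁ ∈ T := Finset.mem_filter.2 ⟨hx₁, hx₁r.symm⟩
  have hTne : T.Nonempty := ⟨x₁, hx₁T⟩
  have hr0 : 0 ≤ r := le_trans dist_nonneg (hle c x₁ hx₁)
  have hchull : c ∈ convexHull ℝ (T : Set E) := by
    by_contra hcn
    have hrpos : 0 < r := by
      rcases hr0.lt_or_eq with h | h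
      · exact h
      · exfalso
        apply hcn
        have : dist c x₁ = 0 := by rw [h]; exact hx₁r.symm
        have hcx : c = x₁ := by rwa [dist_eq_zero] at this
        rw [hcx]
        exact subset_convexHull ℝ _ hx₁T
    have hKcl : IsClosed (convexHull ℝ (T : Set E)) := T.finite_toSet.isClosed_convexHull ℝ
    have hKcv : Convex ℝ (convexHull ℝ (T : Set E)) := convex_convexHull ℝ _
    have hKne : (convexHull ℝ (T : Set E)).Nonempty :=
      ⟨x₁, subset_convexHull ℝ _ hx₁T⟩
    obtain ⟨v, hvK, hvmin⟩ :=
      exists_norm_eq_iInf_of_complete_convex hKne hKcl.isComplete hKcv c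
    have hproj := (norm_eq_iInf_iff_real_inner_le_zero hKcv hvK).1 hvmin
    set u : E := v - c with hu
    have hu0 : u ≠ 0 := sub_ne_zero.2 fun h => hcn (h ▸ hvK)
    have hupos : 0 < ‖u‖ ^ 2 := by
      have : 0 < ‖u‖ := norm_pos_iff.2 hu0
      positivity
    have hTu : ∀ x ∈ T, ‖u‖ ^ 2 ≤ ⟪x - c, u⟫ := by
      intro x hx
      have h1 : ⟪c - v, x - v⟫ ≤ 0 := hproj x (subset_convexHull ℝ _ hx)
      have h2 : x - c = (x - v) + u := by rw [hu]; abel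
      have h3 : ⟪x - c, u⟫ = ⟪x - v, u⟫ + ‖u‖ ^ 2 := by
        rw [h2, inner_add_left, real_inner_self_eq_norm_sq]
      have h4 : ⟪x - v, u⟫ = -⟪c - v, x - v⟫ := by
        rw [hu, show v - c = -(c - v) by abel, inner_neg_right, real_inner_comm]
      rw [h3, h4]
      linarith
    have hev : ∀ᶠ t in nhdsWithin (0:ℝ) (Set.Ioi 0), ∀ x ∈ s, dist (c + t • u) x < r := by
      rw [Finset.eventually_all]
      intro x hx
      by_cases hxT : x ∈ T
      · filter_upwards [Ioo_mem_nhdsGT_of_mem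
          (show (0:ℝ) ∈ Set.Ico (0:ℝ) 2 by constructor <;> norm_num)] with t ht
        have hxc : ‖x - c‖ = r := by
          rw [show ‖x - c‖ = dist c x by rw [dist_comm, dist_eq_norm]]
          exact (Finset.mem_filter.1 hxT).2
        have hsq : dist (c + t • u) x ^ 2 < r ^ 2 := by
          rw [dist_comm, dist_eq_norm, show x - (c + t • u) = (x - c) - t • u by abel,
            @norm_sub_sq_real, hxc, real_inner_smul_right, norm_smul, Real.norm_eq_abs,
            abs_of_pos ht.1, mul_pow]
          have h5 := hTu x hxT
          nlinarith [mul_pos (mul_pos ht.1 hupos) (show (0:ℝ) < 2 - t by linarith [ht.2]),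
            mul_le_mul_of_nonneg_left h5 ht.1.le]
        exact lt_of_pow_lt_pow_left₀ 2 hr0 hsq
      · have hlt : dist c x < r :=
          lt_of_le_of_ne (hle c x hx) fun h => hxT (Finset.mem_filter.2 ⟨hx, h⟩)
        have hg : Continuous fun t : ℝ => dist (c + t • u) x := by fun_prop
        have htend : Filter.Tendsto (fun t : ℝ => dist (c + t • u) x) (nhds 0)
            (nhds (dist (c + (0:ℝ) • u) x)) := hg.continuousAt
        have : ∀ᶠ t in nhds (0:ℝ), dist (c + t • u) x < r := by
          apply htend.eventually_lt_const
          simpa using hlt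
        exact this.filter_mono nhdsWithin_le_nhds
    obtain ⟨t, ht⟩ := hev.exists
    have : f (c + t • u) < r := by
      rw [hf, Finset.sup'_lt_iff]
      exact ht
    exact absurd (hglob (c + t • u)) (not_le.2 this)
  rw [Finset.convexHull_eq] at hchull
  obtain ⟨w, hw0, hw1, hcc⟩ := hchull
  rw [T.centerMass_eq_of_sum_1 _ hw1] at hcc
  simp only [id] at hcc
  have hc0 : ∑ x ∈ T, w x • (x - c) = 0 := by
    simp only [smul_sub, Finset.sum_sub_distrib, hcc, ← Finset.sum_smul, hw1, one_smul,
      sub_self]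
  have h2r : 2 * r ^ 2 ≤ D ^ 2 * ((n : ℝ) / ((n : ℝ) + 1)) := by
    apply jung_quad T hTne (le_trans (Finset.card_le_card (Finset.filter_subset _ _)) hcard)
      w hw0 hw1 c hc0 r D
    · intro x hx
      rw [show ‖x - c‖ = dist c x by rw [dist_comm, dist_eq_norm]]
      exact (Finset.mem_filter.1 hx).2
    · intro x hx y hy
      rw [← dist_eq_norm]
      exact hdist x (Finset.filter_subset _ _ hx) y (Finset.filter_subset _ _ hy)
  have hrR : r ≤ R := by
    have hRsq : R ^ 2 = ((n : ℝ) / ((n : ℝ) + 1)) * D ^ 2 / 2 := by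
      rw [hR, div_pow, mul_pow, Real.sq_sqrt (by positivity), Real.sq_sqrt (by norm_num)]
    have : r ^ 2 ≤ R ^ 2 := by rw [hRsq]; nlinarith
    exact le_of_pow_le_pow_left₀ two_ne_zero hR0 this
  exact ⟨c, fun x hx => le_trans (hle c x hx) hrR⟩

end Jung

/-- Jung's theorem: `ℝᵏ` is FR with the optimal constant `ε₀ = 1 - √(k/(k+1))`: every bounded
subset of `ℝᵏ` of diameter `D` is contained in a closed ball of radius `√(k/(k+1))·D/√2`. -/
theorem stmt_4 (k : ℕ) (A : Set (EuclideanSpace ℝ (Fin k))) (hA : Bornology.IsBounded A) :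
    ∃ c : EuclideanSpace ℝ (Fin k),
      A ⊆ Metric.closedBall c
        (Real.sqrt ((k : ℝ) / ((k : ℝ) + 1)) * Metric.diam A / Real.sqrt 2) := by
  classical
  rcases A.eq_empty_or_nonempty with rfl | hAne
  · exact ⟨0, by simp⟩
  set D := Metric.diam A with hDdef
  have hD : 0 ≤ D := Metric.diam_nonneg
  set R := Real.sqrt ((k : ℝ) / ((k : ℝ) + 1)) * D / Real.sqrt 2 with hRdef
  have hfr : Module.finrank ℝ (EuclideanSpace ℝ (Fin k)) = k := finrank_euclideanSpace_fin
  have h_inter : ∀ I : Finset A, I.card ≤ Module.finrank ℝ (EuclideanSpace ℝ (Fin k)) + 1 →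
      (⋂ i ∈ I, Metric.closedBall (i : EuclideanSpace ℝ (Fin k)) R).Nonempty := by
    intro I hI
    set s : Finset (EuclideanSpace ℝ (Fin k)) := I.image Subtype.val with hsdef
    have hcard : s.card ≤ k + 1 := le_trans Finset.card_image_le (by rwa [hfr] at hI)
    have hdist : ∀ x ∈ s, ∀ y ∈ s, dist x y ≤ D := by
      intro x hx y hy
      obtain ⟨a, _, rfl⟩ := Finset.mem_image.1 hx
      obtain ⟨b, _, rfl⟩ := Finset.mem_image.1 hy
      exact Metric.dist_le_diam_of_mem hA a.2 b.2
    obtain ⟨c, hc⟩ := jung_center (n := k) s D hD hcard hdist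
    refine ⟨c, ?_⟩
    simp only [Set.mem_iInter, Metric.mem_closedBall]
    intro i hi
    rw [hRdef]
    exact hc i (Finset.mem_image_of_mem _ hi)
  obtain ⟨p, hp⟩ := Convex.helly_theorem_compact' (𝕜 := ℝ)
    (F := fun a : A => Metric.closedBall (a : EuclideanSpace ℝ (Fin k)) R)
    (fun _ => convex_closedBall _ _) (fun _ => isCompact_closedBall _ _) h_inter
  refine ⟨p, fun x hx => ?_⟩
  have hmem := Set.mem_iInter.1 hp ⟨x, hx⟩
  simpa [Metric.mem_closedBall, dist_comm] using hmem
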